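/- Let K be a finite undirected chordal graph with no dominating vertex (a vertex adjacent to all other vertices), and let K^c be its complement graph. Then for any two edges e1 = {a,b} and e2 = {c,d} of K^c, either e1 and e2 share a common vertex, or there exists an edge of K^c joining an endpoint of e1 to an endpoint of e2. -/

import Mathlib

/-- A chord of a closed walk: an edge of `G` between two vertices of the walk
that is not an edge of the walk. -/
def SimpleGraph.Walk.HasChord {V : Type*} {G : SimpleGraph V} {v : V}
    (c : G.Walk v v) : Prop :=
  ∃ a b, a ∈ c.support ∧ b ∈ c.support ∧ G.Adj a b ∧ s(a, b) ∉ c.edges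

/-- A graph is chordal if every cycle with four or more vertices has a chord. -/
def SimpleGraph.IsChordalGraph {V : Type*} (G : SimpleGraph V) : Prop :=
  ∀ (v : V) (c : G.Walk v v), c.IsCycle → 4 ≤ c.length → c.HasChord

/-- A vertex is dominating if it is adjacent to every other vertex. -/
def SimpleGraph.IsDominatingVertex {V : Type*} (G : SimpleGraph V) (v : V) : Prop :=
  ∀ w, w ≠ v → G.Adj v w

/-- `D` is an orientation of `G`: each edge gets exactly one direction. -/
def SimpleGraph.IsOrientation {V : Type*} (G : SimpleGraph V) (D : V → V → Prop) : Prop :=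
  (∀ a b, G.Adj a b ↔ (D a b ∨ D b a)) ∧ ∀ a b, ¬(D a b ∧ D b a)

/-- An orientation (directed relation) is acyclic if it has no directed cycle. -/
def IsAcyclicRel {V : Type*} (D : V → V → Prop) : Prop :=
  ∀ a, ¬ Relation.TransGen D a a

/-- An orientation is moral (w.r.t. `G`) if it contains no v-structure. -/
def SimpleGraph.IsMoralOrient {V : Type*} (G : SimpleGraph V) (D : V → V → Prop) : Prop :=
  ∀ a b c, D a c → D b c → a ≠ b → G.Adj a b

/-- The number of moral acyclic orientations of `G`. -/
noncomputable def moralAcyclicCount {V : Type*} (G : SimpleGraph V) : ℕ :=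
  Set.ncard {D : V → V → Prop |
    G.IsOrientation D ∧ IsAcyclicRel D ∧ G.IsMoralOrient D}

/-- Join of two graphs: all edges of each plus all edges across. -/
def joinGraph {V1 V2 : Type*} (G1 : SimpleGraph V1) (G2 : SimpleGraph V2) :
    SimpleGraph (V1 ⊕ V2) where
  Adj x y := match x, y with
    | .inl a, .inl b => G1.Adj a b
    | .inr a, .inr b => G2.Adj a b
    | .inl _, .inr _ => True
    | .inr _, .inl _ => True
  symm := ⟨by rintro (a | a) (b | b) h <;> simp_all [SimpleGraph.adj_comm]⟩
  loopless := ⟨by rintro (a | a) h <;> simp_all⟩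

/-- Disjoint union of two graphs. -/
def sumGraph {V1 V2 : Type*} (G1 : SimpleGraph V1) (G2 : SimpleGraph V2) :
    SimpleGraph (V1 ⊕ V2) where
  Adj x y := match x, y with
    | .inl a, .inl b => G1.Adj a b
    | .inr a, .inr b => G2.Adj a b
    | _, _ => False
  symm := ⟨by rintro (a | a) (b | b) h <;> simp_all [SimpleGraph.adj_comm]⟩
  loopless := ⟨by rintro (a | a) h <;> simp_all⟩

theorem complement_edges_close {V : Type*} [Fintype V] (K : SimpleGraph V)
    (hchord : K.IsChordalGraph)
    (hdom : ∀ v : V, ¬ K.IsDominatingVertex v)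
    (a b c d : V) (h1 : Kᶜ.Adj a b) (h2 : Kᶜ.Adj c d) :
    (({a, b} : Set V) ∩ {c, d}).Nonempty ∨
      ∃ x ∈ ({a, b} : Set V), ∃ y ∈ ({c, d} : Set V), Kᶜ.Adj x y := by
  by_contra hcon
  push_neg at hcon
  obtain ⟨hdisj, hcross⟩ := hcon
  rw [Set.eq_empty_iff_forall_notMem] at hdisj
  have hac : a ≠ c := fun h => hdisj a ⟨Or.inl rfl, Or.inl h⟩
  have had : a ≠ d := fun h => hdisj a ⟨Or.inl rfl, Or.inr h⟩
  have hbc : b ≠ c := fun h => hdisj b ⟨Or.inr rfl, Or.inl h⟩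
  have hbd : b ≠ d := fun h => hdisj b ⟨Or.inr rfl, Or.inr h⟩
  have hab : a ≠ b := h1.ne
  have hcd : c ≠ d := h2.ne
  have hnab : ¬ K.Adj a b := h1.2
  have hncd : ¬ K.Adj c d := h2.2
  have key : ∀ x y : V, x ∈ ({a, b} : Set V) → y ∈ ({c, d} : Set V) → x ≠ y →
      K.Adj x y := by
    intro x y hx hy hxy
    by_contra hK
    exact hcross x hx y hy ⟨hxy, hK⟩
  have Aac : K.Adj a c := key a c (Or.inl rfl) (Or.inl rfl) hac
  have Acb : K.Adj c b := (key b c (Or.inr rfl) (Or.inl rfl) hbc).symm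
  have Abd : K.Adj b d := key b d (Or.inr rfl) (Or.inr rfl) hbd
  have Ada : K.Adj d a := (key a d (Or.inl rfl) (Or.inr rfl) had).symm
  let w : K.Walk a a :=
    .cons Aac (.cons Acb (.cons Abd (.cons Ada .nil)))
  have hlen : w.length = 4 := rfl
  have hcyc : w.IsCycle := by
    rw [SimpleGraph.Walk.isCycle_def]
    refine ⟨?_, by simp [w], ?_⟩
    · rw [SimpleGraph.Walk.isTrail_def]
      simp only [w, SimpleGraph.Walk.edges_cons, SimpleGraph.Walk.edges_nil,
        List.nodup_cons, List.mem_cons, List.not_mem_nil, List.nodup_nil, or_false,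
        Sym2.eq_iff]
      tauto
    · simp only [w, SimpleGraph.Walk.support_cons, SimpleGraph.Walk.support_nil,
        List.tail_cons, List.nodup_cons, List.mem_cons, List.not_mem_nil,
        List.nodup_nil, or_false]
      tauto
  obtain ⟨x, y, hx, hy, hxy, hnot⟩ := hchord a w hcyc (by rw [hlen])
  simp only [w, SimpleGraph.Walk.support_cons, SimpleGraph.Walk.support_nil,
    List.mem_cons, List.not_mem_nil, or_false] at hx hy
  simp only [w, SimpleGraph.Walk.edges_cons, SimpleGraph.Walk.edges_nil,
    List.mem_cons, List.not_mem_nil, or_false, Sym2.eq_iff, not_or] at hnot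
  have hne := hxy.ne
  rcases hx with rfl | rfl | rfl | rfl | rfl <;>
    rcases hy with rfl | rfl | rfl | rfl | rfl <;>
    simp_all <;>
    first
      | exact hnab hxy
      | exact hnab hxy.symm
      | exact hncd hxy
      | exact hncd hxy.symm
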